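/- arXiv:1909.01928 — 2 statements merged into one kernel-verified Lean document; each statement's English description precedes it below -/
import Mathlib

section
/- Let ξ ∈ 𝔽_q((T^{-1})) be irrational and let α ∈ 𝔽_q((T^{-1})) be arbitrary. Then there exist infinitely many monic polynomials Q ∈ 𝔽_q[T] such that |Qξ − α − P| ≤ 1/(q·|Q|) for some polynomial P ∈ 𝔽_q[T]. -/
open Polynomial Filter
open scoped Classical ENNReal
set_option linter.unusedSectionVars false

noncomputable section

variable (Fq : Type) [Field Fq] [Fintype Fq]

/-- The element `T` inside the Laurent-series field `𝔽_q((T⁻¹))`, which we realize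
as the field of Hahn/Laurent series in the variable `T⁻¹`. -/
def Tel : LaurentSeries Fq := HahnSeries.single (-1 : ℤ) 1

/-- The inverse variable `T⁻¹` itself. -/
def TinvEl : LaurentSeries Fq := HahnSeries.single (1 : ℤ) 1

/-- The embedding of the polynomial ring `𝔽_q[T]` into `𝔽_q((T⁻¹))`,
sending `T` to `Tel`. -/
def polyToL (P : Polynomial Fq) : LaurentSeries Fq :=
  Polynomial.eval₂ HahnSeries.C (Tel Fq) P

/-- The absolute value `|x| = q ^ (deg x)` on `𝔽_q((T⁻¹))`, with `|0| = 0`.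
Here the degree of `x ≠ 0` is minus the order of `x` as a series in `T⁻¹`. -/
def labs (x : LaurentSeries Fq) : ℝ :=
  if x = 0 then 0 else (Fintype.card Fq : ℝ) ^ (-x.order)

/-- `‖x‖`: the distance from `x` to the nearest polynomial. -/
def lnorm (x : LaurentSeries Fq) : ℝ :=
  ⨅ P : Polynomial Fq, labs Fq (x - polyToL Fq P)

/-- `x ∈ 𝔽_q(T)`, i.e. `x` is rational. -/
def IsRat (x : LaurentSeries Fq) : Prop :=
  ∃ P Q : Polynomial Fq, Q ≠ 0 ∧ polyToL Fq Q * x = polyToL Fq P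



lemma Tel_pow (i : ℕ) : (Tel Fq) ^ i = HahnSeries.single (-(i : ℤ)) 1 := by
  induction i with
  | zero => simp [HahnSeries.single_zero_one]
  | succ n ih =>
    rw [pow_succ, ih, Tel, HahnSeries.single_mul_single]
    norm_num
    ring_nf

lemma sum_coeff {β : Type*} (s : Finset β) (f : β → LaurentSeries Fq) (j : ℤ) :
    (∑ i ∈ s, f i).coeff j = ∑ i ∈ s, (f i).coeff j :=
  map_sum (HahnSeries.coeff.addMonoidHom j) f s

lemma polyToL_eq_sum (W : Polynomial Fq) :
    polyToL Fq W = ∑ i ∈ Finset.range (W.natDegree + 1),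
      HahnSeries.single (-(i : ℤ)) (W.coeff i) := by
  rw [polyToL, Polynomial.eval₂_eq_sum_range]
  refine Finset.sum_congr rfl fun i _ => ?_
  rw [Tel_pow]
  rw [show (HahnSeries.C (W.coeff i) : LaurentSeries Fq) = HahnSeries.single 0 (W.coeff i) from rfl]
  rw [HahnSeries.single_mul_single]
  simp

lemma polyToL_coeff_neg (W : Polynomial Fq) (k : ℕ) :
    (polyToL Fq W).coeff (-(k : ℤ)) = W.coeff k := by
  rw [polyToL_eq_sum, sum_coeff]
  by_cases hk : k ≤ W.natDegree
  · rw [Finset.sum_eq_single k]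
    · simp
    · intro b _ hb
      rw [HahnSeries.coeff_single_of_ne]
      simpa using fun h => hb h.symm
    · intro h
      exact absurd (Finset.mem_range.2 (Nat.lt_succ_of_le hk)) h
  · rw [Polynomial.coeff_eq_zero_of_natDegree_lt (not_le.1 hk)]
    refine Finset.sum_eq_zero fun b hb => ?_
    rw [HahnSeries.coeff_single_of_ne]
    simp only [Finset.mem_range] at hb
    omega

lemma polyToL_coeff_pos (W : Polynomial Fq) (j : ℤ) (hj : 0 < j) :
    (polyToL Fq W).coeff j = 0 := by
  rw [polyToL_eq_sum, sum_coeff]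
  refine Finset.sum_eq_zero fun b _ => ?_
  rw [HahnSeries.coeff_single_of_ne]
  omega

lemma mul_xi_coeff (W : Polynomial Fq) (ξ : LaurentSeries Fq) (j : ℤ) (n : ℕ)
    (hn : W.natDegree ≤ n) :
    (polyToL Fq W * ξ).coeff j = ∑ i ∈ Finset.range (n + 1), W.coeff i * ξ.coeff (j + i) := by
  rw [polyToL_eq_sum, Finset.sum_mul, sum_coeff]
  rw [Finset.sum_subset (Finset.range_subset_range.2 (Nat.succ_le_succ hn))]
  · refine Finset.sum_congr rfl fun i _ => ?_
    have h := HahnSeries.coeff_single_mul_add (r := W.coeff i) (x := ξ) (a := j + i) (b := -(i : ℤ))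
    rw [show (j + (i : ℤ)) + (-(i : ℤ)) = j by ring] at h
    exact h
  · intro i _ hi
    simp only [Finset.mem_range] at hi
    rw [Polynomial.coeff_eq_zero_of_natDegree_lt (by omega)]
    simp

lemma mul_coeff_eq_zero (W : Polynomial Fq) (y : LaurentSeries Fq) (j b : ℤ)
    (hy : ∀ m ≤ b, y.coeff m = 0) (hj : j + W.natDegree ≤ b) :
    (polyToL Fq W * y).coeff j = 0 := by
  rw [mul_xi_coeff Fq W y j W.natDegree le_rfl]
  refine Finset.sum_eq_zero fun i hi => ?_
  simp only [Finset.mem_range] at hi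
  rw [hy (j + i) (by omega), mul_zero]

def polyPart (y : LaurentSeries Fq) : Polynomial Fq :=
  ∑ k ∈ Finset.range ((-y.order).toNat + 1), Polynomial.C (y.coeff (-(k : ℤ))) * Polynomial.X ^ k

lemma polyPart_coeff (y : LaurentSeries Fq) (k : ℕ) :
    (polyPart Fq y).coeff k = y.coeff (-(k : ℤ)) := by
  rw [polyPart, Polynomial.finset_sum_coeff]
  simp only [Polynomial.coeff_C_mul, Polynomial.coeff_X_pow]
  by_cases hk : k ≤ (-y.order).toNat
  · rw [Finset.sum_eq_single k]
    · simp
    · intro b _ hb; simp [hb.symm]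
    · intro h; exact absurd (Finset.mem_range.2 (Nat.lt_succ_of_le hk)) h
  · rw [Finset.sum_eq_zero]
    · by_cases hy : y = 0
      · simp [hy]
      · rw [HahnSeries.coeff_eq_zero_of_lt_order]
        omega
    · intro b hb
      simp only [Finset.mem_range] at hb
      have : ¬ (k = b) := by omega
      simp [this]

lemma sub_polyPart_coeff (y : LaurentSeries Fq) (j : ℤ) (hj : j ≤ 0) :
    (y - polyToL Fq (polyPart Fq y)).coeff j = 0 := by
  have hjk : j = -((-j).toNat : ℤ) := by omega
  rw [HahnSeries.coeff_sub, hjk, polyToL_coeff_neg, polyPart_coeff, sub_self]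

lemma card_one_lt : (1 : ℝ) < (Fintype.card Fq : ℝ) := by
  exact_mod_cast Fintype.one_lt_card

lemma labs_le_of_coeff (x : LaurentSeries Fq) (d : ℤ) (h : ∀ j ≤ d, x.coeff j = 0) :
    labs Fq x ≤ (Fintype.card Fq : ℝ) ^ (-(d + 1)) := by
  rw [labs]
  split_ifs with hx
  · positivity
  · have hord : d + 1 ≤ x.order := by
      by_contra hc
      exact (mt HahnSeries.coeff_order_eq_zero.1 hx) (h _ (by omega))
    exact zpow_le_zpow_right₀ (card_one_lt Fq).le (by omega)

lemma polyToL_ne_zero (W : Polynomial Fq) (hW : W ≠ 0) : polyToL Fq W ≠ 0 := by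
  intro h
  apply Polynomial.leadingCoeff_ne_zero.2 hW
  rw [Polynomial.leadingCoeff, ← polyToL_coeff_neg Fq, h, HahnSeries.coeff_zero]

lemma polyToL_order (W : Polynomial Fq) (hW : W ≠ 0) :
    (polyToL Fq W).order = -(W.natDegree : ℤ) := by
  refine le_antisymm ?_ ?_
  · apply HahnSeries.order_le_of_coeff_ne_zero
    rw [polyToL_coeff_neg]
    exact Polynomial.leadingCoeff_ne_zero.2 hW
  · by_contra hc
    push_neg at hc
    have h2 := mt HahnSeries.coeff_order_eq_zero.1 (polyToL_ne_zero Fq W hW)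
    set o := (polyToL Fq W).order with ho
    by_cases hpos : 0 < o
    · exact h2 (polyToL_coeff_pos Fq W o hpos)
    · have : o = -(((-o).toNat : ℕ) : ℤ) := by omega
      rw [this, polyToL_coeff_neg] at h2
      exact h2 (Polynomial.coeff_eq_zero_of_natDegree_lt (by omega))

lemma labs_polyToL (W : Polynomial Fq) (hW : W ≠ 0) :
    labs Fq (polyToL Fq W) = (Fintype.card Fq : ℝ) ^ (W.natDegree : ℤ) := by
  rw [labs, if_neg (polyToL_ne_zero Fq W hW), polyToL_order Fq W hW, neg_neg]

def phi (ξ : LaurentSeries Fq) (d : ℕ) : (Fin d → Fq) →ₗ[Fq] (Fin d → Fq) where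
  toFun v := fun j => ∑ i : Fin d, v i * ξ.coeff ((j : ℤ) + 1 + (i : ℤ))
  map_add' u v := by
    funext j
    simp [add_mul, Finset.sum_add_distrib]
  map_smul' c v := by
    funext j
    simp [Finset.mul_sum, smul_eq_mul, mul_assoc]

def Qv {d : ℕ} (v : Fin d → Fq) : Polynomial Fq :=
  ∑ i : Fin d, Polynomial.C (v i) * Polynomial.X ^ (i : ℕ)

lemma Qv_coeff {d : ℕ} (v : Fin d → Fq) (k : ℕ) :
    (Qv Fq v).coeff k = if h : k < d then v ⟨k, h⟩ else 0 := by
  rw [Qv, Polynomial.finset_sum_coeff]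
  simp only [Polynomial.coeff_C_mul, Polynomial.coeff_X_pow]
  split_ifs with h
  · rw [Finset.sum_eq_single (⟨k, h⟩ : Fin d)]
    · simp
    · intro b _ hb
      have : ¬ (k = (b : ℕ)) := fun hc => hb (by ext; simp [hc.symm])
      simp [this]
    · simp
  · refine Finset.sum_eq_zero fun b _ => ?_
    have : ¬ (k = (b : ℕ)) := fun hc => (by omega : ¬ k < d) (hc ▸ b.2)
    simp [this]

lemma Qv_natDegree_lt {d : ℕ} (hd : 1 ≤ d) (v : Fin d → Fq) : (Qv Fq v).natDegree < d := by
  have : (Qv Fq v).natDegree ≤ d - 1 := by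
    refine Polynomial.natDegree_le_iff_coeff_eq_zero.2 fun N hN => ?_
    rw [Qv_coeff]
    have : ¬ N < d := by omega
    simp [this]
  omega

lemma Qv_ne_zero {d : ℕ} (v : Fin d → Fq) (hv : v ≠ 0) : Qv Fq v ≠ 0 := by
  intro h
  apply hv
  funext i
  have := Qv_coeff Fq v i
  rw [h] at this
  simpa [i.2] using this.symm

lemma Qv_mul_coeff {d : ℕ} (hd : 1 ≤ d) (v : Fin d → Fq) (ξ : LaurentSeries Fq) (j : Fin d) :
    (polyToL Fq (Qv Fq v) * ξ).coeff ((j : ℤ) + 1) = phi Fq ξ d v j := by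
  rw [mul_xi_coeff Fq _ ξ _ (d - 1) (by have := Qv_natDegree_lt Fq hd v; omega)]
  have hd1 : d - 1 + 1 = d := by omega
  rw [hd1]
  rw [← Fin.sum_univ_eq_sum_range (fun i => (Qv Fq v).coeff i * ξ.coeff ((j : ℤ) + 1 + i)) d]
  refine Finset.sum_congr rfl fun i _ => ?_
  rw [Qv_coeff]
  simp [i.2]

lemma polyToL_mul (a b : Polynomial Fq) :
    polyToL Fq (a * b) = polyToL Fq a * polyToL Fq b := Polynomial.eval₂_mul _ _

lemma polyToL_sub (a b : Polynomial Fq) :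
    polyToL Fq (a - b) = polyToL Fq a - polyToL Fq b := Polynomial.eval₂_sub _

lemma polyToL_add (a b : Polynomial Fq) :
    polyToL Fq (a + b) = polyToL Fq a + polyToL Fq b := Polynomial.eval₂_add _ _

lemma exists_good (ξ : LaurentSeries Fq) (hξ : ¬ IsRat Fq ξ) (D : ℕ) :
    ∃ d, D ≤ d ∧ 1 ≤ d ∧ Function.Injective (phi Fq ξ d) := by
  by_contra hcon
  push_neg at hcon
  set E := max D 1 with hEdef
  have hE1 : 1 ≤ E := le_max_right _ _
  have H : ∀ n : ℕ, ∃ v : Fin (E + n) → Fq, v ≠ 0 ∧ phi Fq ξ (E + n) v = 0 := by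
    intro n
    have h1 : ¬ Function.Injective (phi Fq ξ (E + n)) :=
      hcon (E + n) (le_add_of_le_of_nonneg (le_max_left _ _) (Nat.zero_le n)) (by omega)
    by_contra h2
    push_neg at h2
    exact h1 ((injective_iff_map_eq_zero (phi Fq ξ (E + n))).2 fun v hv => by
      by_contra h0; exact (h2 v h0) hv)
  choose v hv0 hvphi using H
  set Q : ℕ → Polynomial Fq := fun n => Qv Fq (v n) with hQdef
  have hQne : ∀ n, Q n ≠ 0 := fun n => Qv_ne_zero Fq _ (hv0 n)
  have hQdeg : ∀ n, (Q n).natDegree < E + n := fun n => Qv_natDegree_lt Fq (by omega) _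
  set y : ℕ → LaurentSeries Fq := fun n =>
    polyToL Fq (Q n) * ξ - polyToL Fq (polyPart Fq (polyToL Fq (Q n) * ξ)) with hydef
  have hy : ∀ n : ℕ, ∀ j : ℤ, j ≤ (E : ℤ) + n → (y n).coeff j = 0 := by
    intro n j hj
    by_cases hj0 : j ≤ 0
    · exact sub_polyPart_coeff Fq _ j hj0
    · push_neg at hj0
      have hjf : ∃ jf : Fin (E + n), ((jf : ℕ) : ℤ) + 1 = j :=
        ⟨⟨(j - 1).toNat, by omega⟩, by simp; omega⟩
      obtain ⟨jf, hjf⟩ := hjf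
      have hkey := Qv_mul_coeff Fq (by omega) (v n) ξ jf
      rw [hvphi n, Pi.zero_apply] at hkey
      simp only [hydef, HahnSeries.coeff_sub]
      rw [polyToL_coeff_pos Fq _ j (by omega), sub_zero, ← hjf]
      exact hkey
  have hyne : ∀ n, y n ≠ 0 := by
    intro n h
    exact hξ ⟨polyPart Fq (polyToL Fq (Q n) * ξ), Q n, hQne n, sub_eq_zero.1 h⟩
  have cross : ∀ n, polyToL Fq (Q n) * y (n + 1) = polyToL Fq (Q (n + 1)) * y n := by
    intro n
    rw [← sub_eq_zero]
    set z := polyToL Fq (Q n) * y (n + 1) - polyToL Fq (Q (n + 1)) * y n with hz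
    have hzp : z = polyToL Fq ((Q (n + 1)) * (polyPart Fq (polyToL Fq (Q n) * ξ))
        - (Q n) * (polyPart Fq (polyToL Fq (Q (n + 1)) * ξ))) := by
      rw [polyToL_sub, polyToL_mul, polyToL_mul, hz]
      simp only [hydef]
      ring
    have hcz : ∀ j : ℤ, z.coeff j = 0 := by
      intro j
      by_cases hj : 0 < j
      · rw [hzp]; exact polyToL_coeff_pos Fq _ j hj
      · push_neg at hj
        rw [hz, HahnSeries.coeff_sub,
          mul_coeff_eq_zero Fq (Q n) (y (n + 1)) j ((E : ℤ) + (n + 1)) (by exact_mod_cast hy (n + 1))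
            (by have := hQdeg n; omega),
          mul_coeff_eq_zero Fq (Q (n + 1)) (y n) j ((E : ℤ) + n) (hy n)
            (by have := hQdeg (n + 1); omega), sub_zero]
    exact HahnSeries.coeff_injective (funext fun j => by rw [hcz j, HahnSeries.coeff_zero])
  have cross0 : ∀ n, polyToL Fq (Q 0) * y n = polyToL Fq (Q n) * y 0 := by
    intro n
    induction n with
    | zero => rfl
    | succ n ih =>
      have hQn := polyToL_ne_zero Fq (Q n) (hQne n)
      apply mul_left_cancel₀ hQn
      calc polyToL Fq (Q n) * (polyToL Fq (Q 0) * y (n + 1))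
          = polyToL Fq (Q 0) * (polyToL Fq (Q n) * y (n + 1)) := by ring
        _ = polyToL Fq (Q 0) * (polyToL Fq (Q (n + 1)) * y n) := by rw [cross n]
        _ = polyToL Fq (Q (n + 1)) * (polyToL Fq (Q 0) * y n) := by ring
        _ = polyToL Fq (Q (n + 1)) * (polyToL Fq (Q n) * y 0) := by rw [ih]
        _ = polyToL Fq (Q n) * (polyToL Fq (Q (n + 1)) * y 0) := by ring
  -- derive a contradiction via orders
  set n := ((y 0).order + (Q 0).natDegree).toNat with hndef
  have hordyn : (E : ℤ) + n + 1 ≤ (y n).order := by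
    by_contra hc
    push_neg at hc
    exact (mt HahnSeries.coeff_order_eq_zero.1 (hyne n)) (hy n _ (by omega))
  have h1 : (polyToL Fq (Q 0) * y n).order = -(((Q 0).natDegree : ℕ) : ℤ) + (y n).order := by
    rw [HahnSeries.order_mul (polyToL_ne_zero Fq _ (hQne 0)) (hyne n),
      polyToL_order Fq _ (hQne 0)]
  have h2 : (polyToL Fq (Q n) * y 0).order = -(((Q n).natDegree : ℕ) : ℤ) + (y 0).order := by
    rw [HahnSeries.order_mul (polyToL_ne_zero Fq _ (hQne n)) (hyne 0),
      polyToL_order Fq _ (hQne n)]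
  rw [cross0 n, h2] at h1
  have hnd0 : (0 : ℤ) ≤ ((Q n).natDegree : ℤ) := by positivity
  have hn : (y 0).order + ((Q 0).natDegree : ℤ) ≤ (n : ℤ) := Int.self_le_toNat _
  have hE1' : (1 : ℤ) ≤ (E : ℤ) := by exact_mod_cast hE1
  omega

lemma good_gives (ξ α : LaurentSeries Fq) (d : ℕ) (hd : 1 ≤ d)
    (hinj : Function.Injective (phi Fq ξ d)) :
    ∃ Q : Polynomial Fq, Q.Monic ∧ Q.natDegree = d ∧ ∃ P : Polynomial Fq,
      labs Fq (polyToL Fq Q * ξ - α - polyToL Fq P) ≤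
        1 / ((Fintype.card Fq : ℝ) * labs Fq (polyToL Fq Q)) := by
  have hsurj : Function.Surjective (phi Fq ξ d) := LinearMap.injective_iff_surjective.1 hinj
  obtain ⟨v, hv⟩ := hsurj (fun j => α.coeff ((j : ℤ) + 1) - ξ.coeff ((j : ℤ) + 1 + d))
  set Q := Polynomial.X ^ d + Qv Fq v with hQ
  have hdlt : (Qv Fq v).degree < (d : ℕ) := by
    refine lt_of_le_of_lt (Polynomial.degree_le_natDegree) ?_
    exact_mod_cast Qv_natDegree_lt Fq hd v
  have hmonic : Q.Monic := Polynomial.monic_X_pow_add hdlt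
  have hdeg : Q.natDegree = d := by
    have hdeg' : Q.degree = (d : ℕ) := by
      rw [hQ]
      rw [Polynomial.degree_add_eq_left_of_degree_lt (by rwa [Polynomial.degree_X_pow])]
      exact Polynomial.degree_X_pow d
    exact Polynomial.natDegree_eq_of_degree_eq_some hdeg'
  have key : ∀ j : Fin d, (polyToL Fq Q * ξ - α).coeff ((j : ℤ) + 1) = 0 := by
    intro j
    have h1 : ((HahnSeries.single (-(d : ℤ)) 1 : LaurentSeries Fq) * ξ).coeff ((j : ℤ) + 1)
        = ξ.coeff ((j : ℤ) + 1 + d) := by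
      have h := HahnSeries.coeff_single_mul_add (r := (1 : Fq)) (x := ξ)
        (a := (j : ℤ) + 1 + d) (b := -(d : ℤ))
      rw [show ((j : ℤ) + 1 + d) + (-(d : ℤ)) = (j : ℤ) + 1 by ring] at h
      rw [h, one_mul]
    have hXd : polyToL Fq (Polynomial.X ^ d) = HahnSeries.single (-(d : ℤ)) 1 := by
      rw [polyToL, Polynomial.eval₂_X_pow, Tel_pow]
    rw [HahnSeries.coeff_sub, hQ, polyToL_add, add_mul, HahnSeries.coeff_add, hXd, h1,
      Qv_mul_coeff Fq hd v ξ j]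
    rw [show phi Fq ξ d v j = α.coeff ((j : ℤ) + 1) - ξ.coeff ((j : ℤ) + 1 + d) from
      congrFun hv j]
    ring
  set y := polyToL Fq Q * ξ - α with hy
  set P := polyPart Fq y with hP
  have hw : ∀ m : ℤ, m ≤ (d : ℤ) → (y - polyToL Fq P).coeff m = 0 := by
    intro m hm
    by_cases hm0 : m ≤ 0
    · exact sub_polyPart_coeff Fq y m hm0
    · rw [HahnSeries.coeff_sub, polyToL_coeff_pos Fq P m (by omega), sub_zero]
      have hjf : ∃ jf : Fin d, ((jf : ℕ) : ℤ) + 1 = m := ⟨⟨(m - 1).toNat, by omega⟩, by simp; omega⟩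
      obtain ⟨jf, hjf⟩ := hjf
      rw [← hjf]
      exact key jf
  refine ⟨Q, hmonic, hdeg, P, ?_⟩
  have h1 := labs_le_of_coeff Fq (y - polyToL Fq P) d hw
  have hQne : Q ≠ 0 := hmonic.ne_zero
  have h2 : labs Fq (polyToL Fq Q) = (Fintype.card Fq : ℝ) ^ (d : ℤ) := by
    rw [labs_polyToL Fq Q hQne, hdeg]
  have hq0 : (0 : ℝ) < (Fintype.card Fq : ℝ) := lt_trans one_pos (card_one_lt Fq)
  have h3 : 1 / ((Fintype.card Fq : ℝ) * (Fintype.card Fq : ℝ) ^ (d : ℤ))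
      = (Fintype.card Fq : ℝ) ^ (-((d : ℤ) + 1)) := by
    rw [zpow_neg, zpow_add₀ (ne_of_gt hq0), zpow_one, one_div, mul_comm]
  rw [h2, h3]
  have : polyToL Fq Q * ξ - α - polyToL Fq P = y - polyToL Fq P := by rw [hy]
  rw [this]
  exact h1


/-- **Approximation by monic multiples.** For irrational `ξ` and arbitrary `α`
there exist infinitely many monic polynomials `Q` with
`|Qξ − α − P| ≤ 1 / (q |Q|)` for some polynomial `P`. -/
theorem stmt2 (ξ α : LaurentSeries Fq) (hξ : ¬ IsRat Fq ξ) :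
    {Q : Polynomial Fq | Q.Monic ∧ ∃ P : Polynomial Fq,
      labs Fq (polyToL Fq Q * ξ - α - polyToL Fq P) ≤
        1 / ((Fintype.card Fq : ℝ) * labs Fq (polyToL Fq Q))}.Infinite := by
  apply Set.Infinite.of_image Polynomial.natDegree
  apply Set.infinite_of_forall_exists_gt
  intro a
  obtain ⟨d, hdD, hd1, hinj⟩ := exists_good Fq ξ hξ (a + 1)
  obtain ⟨Q, hm, hdeg, P, hP⟩ := good_gives Fq ξ α d hd1 hinj
  exact ⟨d, ⟨Q, ⟨hm, P, hP⟩, hdeg⟩, by omega⟩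

end
end

section
/- Let θ, φ, ψ, χ ∈ 𝔽_q((T^{-1})) with ψ ≠ 0, and suppose max{|θχ − φψ|, |ψχ|} ≤ Δ for some real Δ > 0. Then there exists a polynomial P ∈ 𝔽_q[T] satisfying both |θ + Pψ|·|φ + Pχ| ≤ Δ/q and |θ + Pψ| ≤ |ψ|. -/
open Polynomial Filter
open scoped Classical ENNReal

noncomputable section

variable (Fq : Type) [Field Fq] [Fintype Fq]

lemma card_pos' : (0:ℝ) < (Fintype.card Fq : ℝ) := by exact_mod_cast Fintype.card_pos

lemma one_lt_card' : (1:ℝ) < (Fintype.card Fq : ℝ) := by exact_mod_cast Fintype.one_lt_card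

lemma labs_nonneg (x : LaurentSeries Fq) : 0 ≤ labs Fq x := by
  unfold labs; split
  · exact le_refl 0
  · exact le_of_lt (zpow_pos (card_pos' Fq) _)

lemma labs_pos {x : LaurentSeries Fq} (hx : x ≠ 0) : 0 < labs Fq x := by
  unfold labs; rw [if_neg hx]; exact zpow_pos (card_pos' Fq) _

lemma labs_mul (x y : LaurentSeries Fq) :
    labs Fq (x * y) = labs Fq x * labs Fq y := by
  by_cases hx : x = 0
  · simp [hx, labs]
  by_cases hy : y = 0
  · simp [hy, labs]
  unfold labs
  rw [if_neg hx, if_neg hy, if_neg (mul_ne_zero hx hy),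
    HahnSeries.order_mul hx hy, neg_add, zpow_add₀ (ne_of_gt (card_pos' Fq))]

lemma labs_add_le (x y : LaurentSeries Fq) :
    labs Fq (x + y) ≤ max (labs Fq x) (labs Fq y) := by
  by_cases hxy : x + y = 0
  · rw [labs, if_pos hxy]; exact le_max_of_le_left (labs_nonneg Fq x)
  by_cases hx : x = 0
  · simp [hx]
  by_cases hy : y = 0
  · simp [hy]
  have hord := HahnSeries.min_order_le_order_add hxy
  rw [labs, labs, labs, if_neg hx, if_neg hy, if_neg hxy]
  rcases le_total x.order y.order with h | h
  · exact le_max_of_le_left (zpow_le_zpow_right₀ (one_lt_card' Fq).le (by omega))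
  · exact le_max_of_le_right (zpow_le_zpow_right₀ (one_lt_card' Fq).le (by omega))

lemma polyToL_coeff (P : Polynomial Fq) (n : ℤ) :
    (polyToL Fq P).coeff n = if n ≤ 0 then P.coeff (-n).toNat else 0 := by
  unfold polyToL
  rw [Polynomial.eval₂_eq_sum_range]
  have hterm : ∀ i : ℕ, HahnSeries.C (P.coeff i) * Tel Fq ^ i
      = HahnSeries.single (-(i:ℤ)) (P.coeff i) := by
    intro i
    rw [Tel, HahnSeries.single_pow, HahnSeries.C_apply, HahnSeries.single_mul_single]
    simp
  simp_rw [hterm]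
  rw [show ((∑ i ∈ Finset.range (P.natDegree+1), HahnSeries.single (-(i:ℤ)) (P.coeff i)) : LaurentSeries Fq).coeff n = (HahnSeries.coeff.addMonoidHom n) (∑ i ∈ Finset.range (P.natDegree+1), HahnSeries.single (-(i:ℤ)) (P.coeff i)) from rfl, map_sum]
  have : ∀ i ∈ Finset.range (P.natDegree + 1),
      HahnSeries.coeff.addMonoidHom (R := Fq) n (HahnSeries.single (-(i:ℤ)) (P.coeff i))
      = if i = (-n).toNat ∧ n ≤ 0 then P.coeff i else 0 := by
    intro i _
    show (HahnSeries.single (-(i:ℤ)) (P.coeff i)).coeff n = _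
    rw [HahnSeries.coeff_single]
    by_cases hn : n ≤ 0
    · by_cases hi : i = (-n).toNat
      · subst hi
        rw [if_pos (by omega), if_pos (by omega)]
      · rw [if_neg (by omega), if_neg (by tauto)]
    · rw [if_neg (by omega), if_neg (by tauto)]
  rw [Finset.sum_congr rfl this]
  by_cases hn : n ≤ 0
  · simp only [hn, and_true]
    rw [Finset.sum_ite_eq' (Finset.range (P.natDegree + 1)) ((-n).toNat) (fun i => P.coeff i)]
    simp only [if_true]
    split
    · rfl
    · next hmem =>
      rw [Finset.mem_range, not_lt] at hmem
      exact (Polynomial.coeff_eq_zero_of_natDegree_lt (by omega)).symm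
  · simp [hn]

lemma labs_neg (x : LaurentSeries Fq) : labs Fq (-x) = labs Fq x := by
  unfold labs
  rw [neg_eq_zero, HahnSeries.order_neg]

lemma exists_poly_approx (x : LaurentSeries Fq) :
    ∃ P : Polynomial Fq, labs Fq (x - polyToL Fq P) ≤ ((Fintype.card Fq : ℝ))⁻¹ := by
  set N := (1 - x.order).toNat with hN
  refine ⟨∑ i ∈ Finset.range N, Polynomial.C (x.coeff (-(i:ℤ))) * Polynomial.X ^ i, ?_⟩
  set Q : Polynomial Fq := ∑ i ∈ Finset.range N, Polynomial.C (x.coeff (-(i:ℤ))) * Polynomial.X ^ i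
    with hQdef
  set y := x - polyToL Fq Q with hy
  have hP : ∀ k : ℕ, Q.coeff k = if k < N then x.coeff (-(k:ℤ)) else 0 := by
    intro k
    rw [hQdef, Polynomial.finset_sum_coeff]
    simp_rw [Polynomial.coeff_C_mul, Polynomial.coeff_X_pow, mul_ite, mul_one, mul_zero]
    rw [Finset.sum_ite_eq (Finset.range N) k (fun i => x.coeff (-(i:ℤ)))]
    simp [Finset.mem_range]
  have hcoeff : ∀ n : ℤ, n ≤ 0 → y.coeff n = 0 := by
    intro n hn
    rw [hy, HahnSeries.coeff_sub, polyToL_coeff, if_pos hn, hP]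
    split
    · have h1 : -(((-n).toNat : ℕ) : ℤ) = n := by omega
      rw [h1, sub_self]
    · next hlt =>
      rw [not_lt] at hlt
      have hno : n < x.order := by
        have := Int.self_le_toNat (1 - x.order)
        omega
      rw [HahnSeries.coeff_eq_zero_of_lt_order hno, sub_zero]
  by_cases hy0 : y = 0
  · rw [labs, if_pos hy0]
    positivity
  · rw [labs, if_neg hy0]
    have horder : 1 ≤ y.order := by
      by_contra hlt
      exact hy0 (HahnSeries.coeff_order_eq_zero.mp <| hcoeff y.order (by omega))
    calc (Fintype.card Fq : ℝ) ^ (-y.order) ≤ (Fintype.card Fq : ℝ) ^ (-1 : ℤ) :=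
          zpow_le_zpow_right₀ (one_lt_card' Fq).le (by omega)
      _ = _ := zpow_neg_one _


/-- **Transference lemma.** If `ψ ≠ 0` and `max {|θχ − φψ|, |ψχ|} ≤ Δ`, then some
polynomial `P` satisfies `|θ + Pψ|·|φ + Pχ| ≤ Δ/q` and `|θ + Pψ| ≤ |ψ|`. -/
theorem stmt7 (θ φ ψ χ : LaurentSeries Fq) (hψ : ψ ≠ 0) (Δ : ℝ) (hΔ : 0 < Δ)
    (h : max (labs Fq (θ * χ - φ * ψ)) (labs Fq (ψ * χ)) ≤ Δ) :
    ∃ P : Polynomial Fq,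
      labs Fq (θ + polyToL Fq P * ψ) * labs Fq (φ + polyToL Fq P * χ) ≤
        Δ / (Fintype.card Fq : ℝ) ∧
      labs Fq (θ + polyToL Fq P * ψ) ≤ labs Fq ψ := by
  obtain ⟨P, hP⟩ := exists_poly_approx Fq (θ / ψ)
  set q : ℝ := (Fintype.card Fq : ℝ) with hq
  have hq1 : 1 < q := one_lt_card' Fq
  have hq0 : 0 < q := card_pos' Fq
  have hneg : polyToL Fq (-P) = - polyToL Fq P := by
    unfold polyToL; rw [Polynomial.eval₂_neg]
  have hA : θ + polyToL Fq (-P) * ψ = (θ / ψ - polyToL Fq P) * ψ := by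
    rw [hneg]; field_simp; ring
  set a := labs Fq (θ + polyToL Fq (-P) * ψ) with ha
  set b := labs Fq (φ + polyToL Fq (-P) * χ) with hb
  set s := labs Fq ψ with hs
  set c := labs Fq χ with hc
  have hs0 : 0 < s := labs_pos Fq hψ
  have ha0 : 0 ≤ a := labs_nonneg Fq _
  have hb0 : 0 ≤ b := labs_nonneg Fq _
  have hc0 : 0 ≤ c := labs_nonneg Fq _
  have hsc : s * c ≤ Δ := by
    rw [hs, hc, ← labs_mul]
    exact (le_max_right _ _).trans h
  have haq : q * a ≤ s := by
    rw [ha, hA, labs_mul, ← hs]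
    calc q * (labs Fq (θ / ψ - polyToL Fq P) * s) ≤ q * (q⁻¹ * s) := by
          apply mul_le_mul_of_nonneg_left _ hq0.le
          exact mul_le_mul_of_nonneg_right hP hs0.le
      _ = s := by field_simp
  have hkey : s * b ≤ max Δ (c * a) := by
    have hid : ψ * (φ + polyToL Fq (-P) * χ) =
        -(θ * χ - φ * ψ) + χ * (θ + polyToL Fq (-P) * ψ) := by ring
    have h2 := labs_add_le Fq (-(θ * χ - φ * ψ)) (χ * (θ + polyToL Fq (-P) * ψ))
    rw [← hid, labs_mul, labs_neg, labs_mul] at h2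
    rw [← hs, ← hb, ← hc, ← ha] at h2
    refine h2.trans (max_le_max ((le_max_left _ _).trans h) le_rfl)
  refine ⟨-P, ?_, ?_⟩
  · rw [le_div_iff₀ hq0]
    rcases max_cases Δ (c * a) with ⟨hm, _⟩ | ⟨hm, _⟩ <;> rw [hm] at hkey
    · -- s * b ≤ Δ : a*b*q ≤ Δ
      nlinarith [mul_le_mul_of_nonneg_right haq hb0]
    · -- s * b ≤ c * a
      nlinarith [mul_le_mul_of_nonneg_right haq hb0, mul_le_mul_of_nonneg_left haq hc0,
        mul_le_mul_of_nonneg_right hsc ha0, mul_nonneg ha0 hb0]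
  · nlinarith

end
end
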